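/- Let L be a positive integer and W_1, …, W_L i.i.d. standard Gaussian (mean 0, variance 1) random variables, and let x₀ ≠ 0 be a real number. Then E[(x₀·Σ_{l=1}^{L} Π_{k≠l}(1 + W_k/√L))²] = Θ(L²): there exist constants 0 < K₁ ≤ K₂ (depending only on x₀) and L₀ such that K₁·L² ≤ E[(x₀·Σ_{l=1}^{L} Π_{k≠l}(1 + W_k/√L))²] ≤ K₂·L² for all L ≥ L₀. Consequently, for a learning rate η, the corresponding first-order one-step update term satisfies E[((η/√L)·Σ_{l=1}^{L} Π_{k≠l}(1 + W_k/√L)·x₀)²] = Θ(η²·L), so η = Θ(L^{−1/2}) is the maximal learning rate scaling for which it stays bounded as L → ∞. -/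

import Mathlib

open MeasureTheory ProbabilityTheory Finset

namespace Stmt2Aux

open Real

noncomputable def E' (x : ℝ) : ℝ := rexp (-(1/2) * x ^ 2)

lemma pdf_eq (x : ℝ) : gaussianPDFReal 0 1 x = (Real.sqrt (2 * π))⁻¹ * E' x := by
  simp only [gaussianPDFReal, E', NNReal.coe_one, mul_one, sub_zero]
  ring_nf

lemma I0 : ∫ x : ℝ, E' x = Real.sqrt (2 * π) := by
  simpa [E', div_div_eq_mul_div, mul_comm] using integral_gaussian (1/2)

lemma J0 : Integrable E' := integrable_exp_neg_mul_sq (by norm_num)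
lemma J1 : Integrable (fun x => x * E' x) := integrable_mul_exp_neg_mul_sq (by norm_num)
lemma J2 : Integrable (fun x => x ^ 2 * E' x) := by
  have := integrable_rpow_mul_exp_neg_mul_sq (b := 1/2) (by norm_num) (s := 2) (by norm_num)
  simpa [E', Real.rpow_natCast] using this

lemma I1 : ∫ x : ℝ, x * E' x = 0 := by
  have h := integral_neg_eq_self (fun x => x * E' x) (volume : Measure ℝ)
  simp only [E', neg_neg, neg_sq, neg_mul, integral_neg] at h
  simp only [E', neg_mul]
  linarith [h]

lemma I2 : ∫ x : ℝ, x ^ 2 * E' x = Real.sqrt (2 * π) := by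
  have hd : ∀ x : ℝ, HasDerivAt (fun y : ℝ => -y * E' y) ((x ^ 2 - 1) * E' x) x := by
    intro x
    have h1 : HasDerivAt (fun y : ℝ => -(1/2) * y ^ 2) (-(1/2) * (2 * x)) x := by
      simpa using ((hasDerivAt_pow 2 x).const_mul (-(1/2 : ℝ)))
    have h2 : HasDerivAt (fun y : ℝ => E' y) (E' x * (-(1/2) * (2 * x))) x := h1.exp
    have h3 : HasDerivAt (fun y : ℝ => -y * E' y) _ x := (hasDerivAt_neg x).mul h2
    convert h3 using 1
    simp [E']; ring
  have hint : IntegrableOn (fun x : ℝ => (x ^ 2 - 1) * E' x) (Set.Ioi 0) := by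
    apply Integrable.integrableOn
    have : (fun x : ℝ => (x ^ 2 - 1) * E' x) = fun x => x ^ 2 * E' x - E' x := by
      funext x; ring
    rw [this]; exact J2.sub J0
  have htend : Filter.Tendsto (fun y : ℝ => -y * E' y) Filter.atTop (nhds 0) := by
    have h1 := rpow_mul_exp_neg_mul_sq_isLittleO_exp_neg (b := 1/2) (by norm_num) 1
    have h2 : Filter.Tendsto (fun x : ℝ => rexp (-(1/2) * x)) Filter.atTop (nhds 0) := by
      apply Real.tendsto_exp_atBot.comp
      exact Filter.tendsto_id.const_mul_atTop_of_neg (by norm_num)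
    have h3 := h1.trans_tendsto h2
    have h4 := h3.neg
    simp only [neg_zero] at h4
    refine h4.congr (fun x => ?_)
    simp [E', Real.rpow_one]
  have key := integral_Ioi_of_hasDerivAt_of_tendsto' (f := fun y : ℝ => -y * E' y)
    (f' := fun x : ℝ => (x ^ 2 - 1) * E' x) (a := 0) (fun x _ => hd x) hint htend
  have key2 : ∫ x in Set.Ioi (0:ℝ), (x ^ 2 - 1) * E' x = 0 := by
    simpa using key
  have hsplit : ∫ x in Set.Ioi (0:ℝ), x ^ 2 * E' x = ∫ x in Set.Ioi (0:ℝ), E' x := by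
    have := integral_sub (J2.integrableOn) (J0.integrableOn) (μ := volume.restrict (Set.Ioi 0))
    have heq : ∫ x in Set.Ioi (0:ℝ), (x ^ 2 - 1) * E' x
        = (∫ x in Set.Ioi (0:ℝ), x ^ 2 * E' x) - ∫ x in Set.Ioi (0:ℝ), E' x := by
      rw [← this]; congr 1; funext x; ring
    linarith [key2, heq ▸ key2]
  have hIoi : ∫ x in Set.Ioi (0:ℝ), E' x = Real.sqrt (2 * π) / 2 := by
    have := integral_gaussian_Ioi (1/2)
    rw [show π / (1/2 : ℝ) = 2 * π by ring] at this
    simpa [E', neg_mul] using this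
  have hIic : ∫ x in Set.Iic (0:ℝ), x ^ 2 * E' x = ∫ x in Set.Ioi (0:ℝ), x ^ 2 * E' x := by
    have := integral_comp_neg_Ioi (0:ℝ) (fun x => x ^ 2 * E' x)
    simp only [neg_zero, neg_sq] at this
    rw [← this]
    refine setIntegral_congr_fun measurableSet_Ioi (fun x _ => ?_)
    simp [E', neg_sq]
  have htot := intervalIntegral.integral_Iic_add_Ioi (b := (0:ℝ)) (f := fun x => x ^ 2 * E' x)
    (J2.integrableOn) (J2.integrableOn)
  rw [hIic, hsplit, hIoi] at htot
  rw [← htot]; ring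

noncomputable def γ : Measure ℝ := gaussianReal 0 1

noncomputable def pdfnn (x : ℝ) : NNReal := Real.toNNReal (gaussianPDFReal 0 1 x)

lemma γ_eq : γ = (volume : Measure ℝ).withDensity fun x => ((pdfnn x : NNReal) : ENNReal) :=
  gaussianReal_of_var_ne_zero 0 one_ne_zero

lemma pdfnn_meas : Measurable pdfnn := (measurable_gaussianPDFReal 0 1).real_toNNReal

lemma smul_eq' (y x : ℝ) :
    pdfnn x • y = (Real.sqrt (2 * π))⁻¹ * (y * E' x) := by
  have h : ((pdfnn x : NNReal) : ℝ) = gaussianPDFReal 0 1 x :=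
    Real.coe_toNNReal _ (gaussianPDFReal_nonneg 0 1 x)
  rw [NNReal.smul_def, h, pdf_eq, smul_eq_mul]; ring

lemma integrable_poly (a b d : ℝ) : Integrable (fun x => a + b * x + d * x ^ 2) γ := by
  rw [γ_eq, integrable_withDensity_iff_integrable_smul pdfnn_meas]
  have : (fun x : ℝ => pdfnn x • (a + b * x + d * x ^ 2))
      = fun x => ((Real.sqrt (2 * π))⁻¹ * a) * E' x
        + ((Real.sqrt (2 * π))⁻¹ * b) * (x * E' x)
        + ((Real.sqrt (2 * π))⁻¹ * d) * (x ^ 2 * E' x) := by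
    funext x; rw [smul_eq']; ring
  rw [this]
  exact ((J0.const_mul _).add (J1.const_mul _)).add (J2.const_mul _)

lemma integral_poly (a b d : ℝ) : ∫ x, (a + b * x + d * x ^ 2) ∂γ = a + d := by
  set C := (Real.sqrt (2 * π))⁻¹ with hC
  rw [γ_eq, integral_withDensity_eq_integral_smul pdfnn_meas]
  have hfun : (fun x : ℝ => pdfnn x • (a + b * x + d * x ^ 2))
      = fun x => (C * a) * E' x + (C * b) * (x * E' x) + (C * d) * (x ^ 2 * E' x) := by
    funext x; rw [smul_eq']; ring
  have hA : Integrable (fun x : ℝ => (C * a) * E' x) := J0.const_mul _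
  have hB : Integrable (fun x : ℝ => (C * b) * (x * E' x)) := J1.const_mul _
  have hD : Integrable (fun x : ℝ => (C * d) * (x ^ 2 * E' x)) := J2.const_mul _
  have hAB : Integrable (fun x : ℝ => (C * a) * E' x + (C * b) * (x * E' x)) := hA.add hB
  rw [hfun, integral_add hAB hD, integral_add hA hB,
    integral_const_mul, integral_const_mul, integral_const_mul, I0, I1, I2]
  have h : Real.sqrt (2 * π) ≠ 0 := by positivity
  rw [hC]
  field_simp
  ring

instance : IsProbabilityMeasure γ := by unfold γ; infer_instance

lemma int_one : ∫ _ : ℝ, (1:ℝ) ∂γ = 1 := by simp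

lemma int_g1 (c : ℝ) : ∫ t, (1 + t * c) ∂γ = 1 := by
  have h := integral_poly 1 c 0
  rw [show (fun x : ℝ => 1 + c * x + 0 * x ^ 2) = fun x : ℝ => 1 + x * c from
    funext fun x => by ring] at h
  rw [h]; ring

lemma int_g2 (c : ℝ) : ∫ t, (1 + t * c) ^ 2 ∂γ = 1 + c ^ 2 := by
  have h := integral_poly 1 (2 * c) (c ^ 2)
  rw [show (fun x : ℝ => 1 + 2 * c * x + c ^ 2 * x ^ 2) = fun x : ℝ => (1 + x * c) ^ 2 from
    funext fun x => by ring] at h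
  exact h

lemma intble_g1 (c : ℝ) : Integrable (fun t => 1 + t * c) γ := by
  have h := integrable_poly 1 c 0
  rwa [show (fun x : ℝ => 1 + c * x + 0 * x ^ 2) = fun x : ℝ => 1 + x * c from
    funext fun x => by ring] at h

lemma intble_g2 (c : ℝ) : Integrable (fun t => (1 + t * c) ^ 2) γ := by
  have h := integrable_poly 1 (2 * c) (c ^ 2)
  rwa [show (fun x : ℝ => 1 + 2 * c * x + c ^ 2 * x ^ 2) = fun x : ℝ => (1 + x * c) ^ 2 from
    funext fun x => by ring] at h

noncomputable def gMS : MeasureSpace ℝ := ⟨γ⟩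

lemma integral_pi_gauss {L : ℕ} (f : Fin L → ℝ → ℝ) :
    ∫ ω, ∏ k, f k (ω k) ∂(Measure.pi fun _ : Fin L => gaussianReal 0 1)
      = ∏ k, ∫ t, f k t ∂γ := by
  have := MeasureTheory.integral_fintype_prod_eq_prod (𝕜 := ℝ) f (μ := fun _ : Fin L => γ)
  exact this

lemma integrable_pi_gauss {L : ℕ} (f : Fin L → ℝ → ℝ) (hf : ∀ k, Integrable (f k) γ) :
    Integrable (fun ω => ∏ k, f k (ω k)) (Measure.pi fun _ : Fin L => gaussianReal 0 1) := by
  have := MeasureTheory.Integrable.fintype_prod (μ := fun _ : Fin L => γ) hf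
  exact this

end Stmt2Aux

/-- The joint law of `L` i.i.d. standard Gaussian random variables `W_1, …, W_L`,
realized canonically on `Fin L → ℝ`. -/
noncomputable def stdGaussPi (L : ℕ) : Measure (Fin L → ℝ) :=
  Measure.pi fun _ => gaussianReal 0 1
/-- `E[(x₀·∑_{l=1}^{L} ∏_{k≠l}(1 + W_k/√L))²] = Θ(L²)`, and consequently
`E[((η/√L)·∑_{l=1}^{L} ∏_{k≠l}(1 + W_k/√L)·x₀)²] = Θ(η²·L)` for any learning rate `η`. -/
theorem stmt_2 (x₀ : ℝ) (hx₀ : x₀ ≠ 0) :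
    ∃ K₁ K₂ : ℝ, 0 < K₁ ∧ K₁ ≤ K₂ ∧ ∃ L₀ : ℕ,
      ∀ L : ℕ, L₀ ≤ L →
        (K₁ * (L : ℝ) ^ 2 ≤
            ∫ ω, (x₀ * ∑ l, ∏ k ∈ Finset.univ.erase l, (1 + ω k / Real.sqrt L)) ^ 2
              ∂(stdGaussPi L)) ∧
        ((∫ ω, (x₀ * ∑ l, ∏ k ∈ Finset.univ.erase l, (1 + ω k / Real.sqrt L)) ^ 2
              ∂(stdGaussPi L)) ≤ K₂ * (L : ℝ) ^ 2) ∧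
        ∀ η : ℝ,
          K₁ * (η ^ 2 * L) ≤
            (∫ ω, ((η / Real.sqrt L) *
                (∑ l, ∏ k ∈ Finset.univ.erase l, (1 + ω k / Real.sqrt L)) * x₀) ^ 2
              ∂(stdGaussPi L)) ∧
          (∫ ω, ((η / Real.sqrt L) *
                (∑ l, ∏ k ∈ Finset.univ.erase l, (1 + ω k / Real.sqrt L)) * x₀) ^ 2
              ∂(stdGaussPi L)) ≤ K₂ * (η ^ 2 * L) := by
  have hx2 : (0:ℝ) < x₀ ^ 2 := by positivity
  refine ⟨x₀ ^ 2, 3 * x₀ ^ 2, hx2, by nlinarith, 1, ?_⟩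
  intro L hL
  have hL0 : (0:ℝ) < L := by exact_mod_cast hL
  have hLne : (L:ℝ) ≠ 0 := ne_of_gt hL0
  have hsqrt : (0:ℝ) < Real.sqrt L := Real.sqrt_pos.mpr hL0
  set c : ℝ := (Real.sqrt L)⁻¹ with hc
  have hc2 : c ^ 2 = (L:ℝ)⁻¹ := by
    rw [hc, inv_pow, Real.sq_sqrt hL0.le]
  set g : Fin L → Fin L → Fin L → ℝ → ℝ := fun l l' k t =>
    (if k = l then 1 else 1 + t * c) * (if k = l' then 1 else 1 + t * c) with hg
  -- pointwise expansion
  have hP : ∀ (ω : Fin L → ℝ) (l : Fin L),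
      ∏ k ∈ Finset.univ.erase l, (1 + ω k / Real.sqrt L)
        = ∏ k, (if k = l then (1:ℝ) else 1 + ω k * c) := by
    intro ω l
    rw [← Finset.prod_erase_mul Finset.univ _ (Finset.mem_univ l), if_pos rfl, mul_one]
    refine Finset.prod_congr rfl fun k hk => ?_
    rw [if_neg (Finset.mem_erase.mp hk).1, div_eq_mul_inv]
  have hpoint : ∀ ω : Fin L → ℝ,
      (x₀ * ∑ l, ∏ k ∈ Finset.univ.erase l, (1 + ω k / Real.sqrt L)) ^ 2
        = x₀ ^ 2 * ∑ l, ∑ l', ∏ k, g l l' k (ω k) := by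
    intro ω
    have h1 : (x₀ * ∑ l, ∏ k ∈ Finset.univ.erase l, (1 + ω k / Real.sqrt L)) ^ 2
        = x₀ ^ 2 * ((∑ l, ∏ k, (if k = l then (1:ℝ) else 1 + ω k * c))
            * (∑ l', ∏ k, (if k = l' then (1:ℝ) else 1 + ω k * c))) := by
      simp_rw [hP ω]; ring
    rw [h1, Finset.sum_mul_sum]
    refine congrArg (x₀ ^ 2 * ·) ?_
    refine Finset.sum_congr rfl fun l _ => Finset.sum_congr rfl fun l' _ => ?_
    rw [← Finset.prod_mul_distrib]
  -- per-coordinate integrability and integrals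
  have hcase : ∀ l l' k : Fin L,
      Integrable (fun t => g l l' k t) Stmt2Aux.γ ∧
      ((∫ t, g l l' k t ∂Stmt2Aux.γ) = 1 ∨ (∫ t, g l l' k t ∂Stmt2Aux.γ) = 1 + (L:ℝ)⁻¹) := by
    intro l l' k
    by_cases h1 : k = l
    · by_cases h2 : k = l'
      · have hgk : (fun t : ℝ => g l l' k t) = fun _ => (1:ℝ) := by
          funext t
          show (if k = l then (1:ℝ) else 1 + t * c) * (if k = l' then 1 else 1 + t * c) = _
          rw [if_pos h1, if_pos h2, one_mul]
        rw [hgk]; exact ⟨integrable_const 1, Or.inl Stmt2Aux.int_one⟩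
      · have hgk : (fun t : ℝ => g l l' k t) = fun t => 1 + t * c := by
          funext t
          show (if k = l then (1:ℝ) else 1 + t * c) * (if k = l' then 1 else 1 + t * c) = _
          rw [if_pos h1, if_neg h2, one_mul]
        rw [hgk]; exact ⟨Stmt2Aux.intble_g1 c, Or.inl (Stmt2Aux.int_g1 c)⟩
    · by_cases h2 : k = l'
      · have hgk : (fun t : ℝ => g l l' k t) = fun t => 1 + t * c := by
          funext t
          show (if k = l then (1:ℝ) else 1 + t * c) * (if k = l' then 1 else 1 + t * c) = _
          rw [if_neg h1, if_pos h2, mul_one]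
        rw [hgk]; exact ⟨Stmt2Aux.intble_g1 c, Or.inl (Stmt2Aux.int_g1 c)⟩
      · have hgk : (fun t : ℝ => g l l' k t) = fun t => (1 + t * c) ^ 2 := by
          funext t
          show (if k = l then (1:ℝ) else 1 + t * c) * (if k = l' then 1 else 1 + t * c) = _
          rw [if_neg h1, if_neg h2]; ring
        rw [hgk]
        refine ⟨Stmt2Aux.intble_g2 c, Or.inr ?_⟩
        rw [Stmt2Aux.int_g2 c, hc2]
  -- bounds on each product of integrals
  have hfac_lo : ∀ l l' k : Fin L, (1:ℝ) ≤ ∫ t, g l l' k t ∂Stmt2Aux.γ := by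
    intro l l' k
    have hLi : (0:ℝ) ≤ (L:ℝ)⁻¹ := by positivity
    rcases (hcase l l' k).2 with h | h
    · rw [h]
    · rw [h]; linarith
  have hfac_hi : ∀ l l' k : Fin L, (∫ t, g l l' k t ∂Stmt2Aux.γ) ≤ 1 + (L:ℝ)⁻¹ := by
    intro l l' k
    have hLi : (0:ℝ) ≤ (L:ℝ)⁻¹ := by positivity
    rcases (hcase l l' k).2 with h | h
    · rw [h]; linarith
    · rw [h]
  have hpow3 : (1 + (L:ℝ)⁻¹) ^ L ≤ 3 := by
    have h1 : (1 + (L:ℝ)⁻¹) ≤ Real.exp ((L:ℝ)⁻¹) := by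
      have := Real.add_one_le_exp ((L:ℝ)⁻¹)
      linarith
    have h2 : (1 + (L:ℝ)⁻¹) ^ L ≤ Real.exp ((L:ℝ)⁻¹) ^ L := by
      apply pow_le_pow_left₀ (by positivity) h1
    have h3 : Real.exp ((L:ℝ)⁻¹) ^ L = Real.exp 1 := by
      rw [← Real.exp_nat_mul, mul_inv_cancel₀ hLne]
    have h4 : Real.exp 1 ≤ 3 := by
      have := Real.exp_one_lt_d9
      linarith
    calc (1 + (L:ℝ)⁻¹) ^ L ≤ Real.exp ((L:ℝ)⁻¹) ^ L := h2
      _ = Real.exp 1 := h3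
      _ ≤ 3 := h4
  have hT_lo : ∀ l l' : Fin L, (1:ℝ) ≤ ∏ k, ∫ t, g l l' k t ∂Stmt2Aux.γ := by
    intro l l'
    calc (1:ℝ) = ∏ _k : Fin L, (1:ℝ) := by simp
      _ ≤ ∏ k, ∫ t, g l l' k t ∂Stmt2Aux.γ :=
        Finset.prod_le_prod (fun k _ => by norm_num) (fun k _ => hfac_lo l l' k)
  have hT_hi : ∀ l l' : Fin L, (∏ k, ∫ t, g l l' k t ∂Stmt2Aux.γ) ≤ 3 := by
    intro l l'
    calc (∏ k, ∫ t, g l l' k t ∂Stmt2Aux.γ) ≤ ∏ _k : Fin L, (1 + (L:ℝ)⁻¹) := by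
          apply Finset.prod_le_prod
          · intro k _; linarith [hfac_lo l l' k]
          · intro k _; exact hfac_hi l l' k
      _ = (1 + (L:ℝ)⁻¹) ^ L := by rw [Finset.prod_const, Finset.card_univ, Fintype.card_fin]
      _ ≤ 3 := hpow3
  -- the main integral identity
  have hintble : ∀ l l' : Fin L,
      Integrable (fun ω => ∏ k, g l l' k (ω k)) (stdGaussPi L) :=
    fun l l' => Stmt2Aux.integrable_pi_gauss _ (fun k => (hcase l l' k).1)
  have hE : (∫ ω, (x₀ * ∑ l, ∏ k ∈ Finset.univ.erase l, (1 + ω k / Real.sqrt L)) ^ 2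
        ∂(stdGaussPi L))
      = x₀ ^ 2 * ∑ l, ∑ l', ∏ k, ∫ t, g l l' k t ∂Stmt2Aux.γ := by
    simp_rw [hpoint]
    rw [integral_const_mul]
    congr 1
    rw [integral_finset_sum _ (fun l _ => integrable_finset_sum _ (fun l' _ => hintble l l'))]
    refine Finset.sum_congr rfl fun l _ => ?_
    rw [integral_finset_sum _ (fun l' _ => hintble l l')]
    exact Finset.sum_congr rfl fun l' _ => Stmt2Aux.integral_pi_gauss _
  -- sum bounds
  have hsum_lo : (L:ℝ) ^ 2 ≤ ∑ l, ∑ l' : Fin L, ∏ k, ∫ t, g l l' k t ∂Stmt2Aux.γ := by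
    calc (L:ℝ) ^ 2 = ∑ _l : Fin L, ∑ _l' : Fin L, (1:ℝ) := by
          simp [Finset.card_univ]; ring
      _ ≤ _ := by
          apply Finset.sum_le_sum
          intro l _
          exact Finset.sum_le_sum fun l' _ => hT_lo l l'
  have hsum_hi : (∑ l, ∑ l' : Fin L, ∏ k, ∫ t, g l l' k t ∂Stmt2Aux.γ) ≤ 3 * (L:ℝ) ^ 2 := by
    calc (∑ l, ∑ l' : Fin L, ∏ k, ∫ t, g l l' k t ∂Stmt2Aux.γ)
        ≤ ∑ _l : Fin L, ∑ _l' : Fin L, (3:ℝ) := by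
          apply Finset.sum_le_sum
          intro l _
          exact Finset.sum_le_sum fun l' _ => hT_hi l l'
      _ = 3 * (L:ℝ) ^ 2 := by simp [Finset.card_univ]; ring
  have hmain_lo : x₀ ^ 2 * (L:ℝ) ^ 2 ≤
      ∫ ω, (x₀ * ∑ l, ∏ k ∈ Finset.univ.erase l, (1 + ω k / Real.sqrt L)) ^ 2 ∂(stdGaussPi L) := by
    rw [hE]
    exact mul_le_mul_of_nonneg_left hsum_lo hx2.le
  have hmain_hi : (∫ ω, (x₀ * ∑ l, ∏ k ∈ Finset.univ.erase l, (1 + ω k / Real.sqrt L)) ^ 2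
      ∂(stdGaussPi L)) ≤ 3 * x₀ ^ 2 * (L:ℝ) ^ 2 := by
    rw [hE]
    calc x₀ ^ 2 * (∑ l, ∑ l' : Fin L, ∏ k, ∫ t, g l l' k t ∂Stmt2Aux.γ)
        ≤ x₀ ^ 2 * (3 * (L:ℝ) ^ 2) := mul_le_mul_of_nonneg_left hsum_hi hx2.le
      _ = 3 * x₀ ^ 2 * (L:ℝ) ^ 2 := by ring
  refine ⟨hmain_lo, hmain_hi, fun η => ?_⟩
  -- second integrand
  have hpoint2 : ∀ ω : Fin L → ℝ,
      ((η / Real.sqrt L) * (∑ l, ∏ k ∈ Finset.univ.erase l, (1 + ω k / Real.sqrt L)) * x₀) ^ 2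
        = (η ^ 2 * (L:ℝ)⁻¹) *
          (x₀ * ∑ l, ∏ k ∈ Finset.univ.erase l, (1 + ω k / Real.sqrt L)) ^ 2 := by
    intro ω
    have hs2 : Real.sqrt L ^ 2 = (L:ℝ) := Real.sq_sqrt hL0.le
    rw [show ((η / Real.sqrt L) *
        (∑ l, ∏ k ∈ Finset.univ.erase l, (1 + ω k / Real.sqrt L)) * x₀) ^ 2
      = η ^ 2 / (Real.sqrt L ^ 2) *
        (x₀ * ∑ l, ∏ k ∈ Finset.univ.erase l, (1 + ω k / Real.sqrt L)) ^ 2 from by ring,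
      hs2, div_eq_mul_inv]
  have hE2 : (∫ ω, ((η / Real.sqrt L) *
        (∑ l, ∏ k ∈ Finset.univ.erase l, (1 + ω k / Real.sqrt L)) * x₀) ^ 2 ∂(stdGaussPi L))
      = (η ^ 2 * (L:ℝ)⁻¹) *
        ∫ ω, (x₀ * ∑ l, ∏ k ∈ Finset.univ.erase l, (1 + ω k / Real.sqrt L)) ^ 2
          ∂(stdGaussPi L) := by
    simp_rw [hpoint2]
    rw [integral_const_mul]
  constructor
  · rw [hE2]
    have h1 : x₀ ^ 2 * (η ^ 2 * L) = (η ^ 2 * (L:ℝ)⁻¹) * (x₀ ^ 2 * (L:ℝ) ^ 2) := by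
      field_simp
    rw [h1]
    exact mul_le_mul_of_nonneg_left hmain_lo (by positivity)
  · rw [hE2]
    have h1 : 3 * x₀ ^ 2 * (η ^ 2 * L) = (η ^ 2 * (L:ℝ)⁻¹) * (3 * x₀ ^ 2 * (L:ℝ) ^ 2) := by
      field_simp
    rw [h1]
    exact mul_le_mul_of_nonneg_left hmain_hi (by positivity)
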